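/- For every fixed β > 0, if the edge-probability function satisfies p(n) ≥ ln n / n, then with high probability a graph G sampled from G(n,p) has the property that every vertex set U with |U| ≤ 12βn spans at most 50β·np·|U| edges, i.e. e_G(U) ≤ 50β·np·|U|. -/

import Mathlib

open Filter Finset SimpleGraph
open scoped Classical

/-- The probability weight of a particular graph `G` on `[n]` under `G(n,p)`. -/
noncomputable def gnpWeight (n : ℕ) (p : ℝ) (G : SimpleGraph (Fin n)) : ℝ :=
  p ^ G.edgeFinset.card * (1 - p) ^ (n.choose 2 - G.edgeFinset.card)

/-- The probability that a random graph `G ~ G(n,p)` satisfies the predicate `A`. -/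
noncomputable def gnpProb (n : ℕ) (p : ℝ) (A : SimpleGraph (Fin n) → Prop) : ℝ :=
  ∑ G : SimpleGraph (Fin n), if A G then gnpWeight n p G else 0

/-- A sequence of graph properties holds with high probability in `G(n, p n)`. -/
def WHP (p : ℕ → ℝ) (A : ∀ n : ℕ, SimpleGraph (Fin n) → Prop) : Prop :=
  Tendsto (fun n => gnpProb n (p n) (A n)) atTop (nhds 1)

/-- Number of edges of a graph. -/
noncomputable def edgeCount {V : Type*} [Fintype V] (G : SimpleGraph V) : ℕ :=
  G.edgeFinset.card

/-- Number of edges with both endpoints in `U`. -/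
noncomputable def eIn {V : Type*} [Fintype V] (G : SimpleGraph V) (U : Finset V) : ℕ :=
  (G.edgeFinset.filter (fun e => ∀ v ∈ e, v ∈ U)).card

/-- Number of edges with one endpoint in `U` and the other in `Z` (for disjoint `U`, `Z`). -/
noncomputable def eBetween {V : Type*} [Fintype V] (G : SimpleGraph V) (U Z : Finset V) : ℕ :=
  ((U ×ˢ Z).filter (fun q => G.Adj q.1 q.2)).card

/-- External neighbourhood of a vertex set. -/
noncomputable def extNbhd {V : Type*} [Fintype V] (G : SimpleGraph V) (U : Finset V) : Finset V :=
  Finset.univ.filter (fun v => v ∉ U ∧ ∃ u ∈ U, G.Adj u v)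

/-- `G` is an `(R, f)`-expander: every set `U` with `|U| ≤ R` satisfies `|N(U)| ≥ f(|U|)·|U|`. -/
def IsExpander {V : Type*} [Fintype V] (G : SimpleGraph V) (R : ℝ) (f : ℕ → ℝ) : Prop :=
  ∀ U : Finset V, U.Nonempty → (U.card : ℝ) ≤ R →
    f U.card * U.card ≤ ((extNbhd G U).card : ℝ)

/-- The expansion function `f_β` on `{1, …, ⌊β n₁⌋}`. -/
noncomputable def fBeta (β : ℝ) (n1 : ℕ) (t : ℕ) : ℝ :=
  if t = Nat.floor (β * n1) then 2 * (1 + 39 * β) / (3 * β)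
  else if (t : ℝ) < (n1 : ℝ) ^ (0.1 : ℝ) then Real.log n1 ^ (0.8 : ℝ)
  else 11

/-- `G₁` is `(n₁, d, β)`-quasi-random. -/
def QuasiRandom {V : Type*} [Fintype V] (G1 : SimpleGraph V) (n1 : ℕ) (d β : ℝ) : Prop :=
  (∀ v : V, d / 150 ≤ (G1.degree v : ℝ)) ∧
  (∀ U : Finset V, (U.card : ℝ) < (n1 : ℝ) ^ (0.11 : ℝ) * Real.log n1 →
    (eIn G1 U : ℝ) ≤ d ^ (0.13 : ℝ) * U.card) ∧
  (∀ U : Finset V, (U.card : ℝ) < 12 * β * n1 →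
    (eIn G1 U : ℝ) ≤ 50 * β * d * U.card) ∧
  (∀ U Z : Finset V, Disjoint U Z → U.card = Nat.floor (β * n1) →
    Z.card = Nat.floor ((1 / 3 - 27 * β) * n1) →
    (n1 : ℝ) * Real.log (Real.log n1) ≤ (eBetween G1 U Z : ℝ))

/-- Longest path length in `G`. -/
noncomputable def longestPath {V : Type*} [Fintype V] (G : SimpleGraph V) : ℕ :=
  sSup {l : ℕ | ∃ (u v : V) (q : G.Walk u v), q.IsPath ∧ q.length = l}

/-- `{u, v}` is a booster with respect to `Γ`. -/
def IsBooster {V : Type*} [Fintype V] (Γ : SimpleGraph V) (u v : V) : Prop :=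
  u ≠ v ∧ ¬ Γ.Adj u v ∧
    ((Γ ⊔ fromEdgeSet {s(u, v)}).IsHamiltonian ∨
      longestPath Γ < longestPath (Γ ⊔ fromEdgeSet {s(u, v)}))

/-- The booster set `B_Γ(v)`. -/
noncomputable def boosterSet {V : Type*} [Fintype V] (Γ : SimpleGraph V) (v : V) : Finset V :=
  Finset.univ.filter (fun w => IsBooster Γ v w)

/-- Membership in the family `𝓛(n, β)` with witnessing partition `V = V₁ ∪ D`. -/
def InFamilyL (n : ℕ) (β : ℝ) (G : SimpleGraph (Fin n)) (V1 D : Finset (Fin n)) : Prop :=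
  Disjoint V1 D ∧ V1 ∪ D = Finset.univ ∧
  ((D.card : ℝ) ≤ (n : ℝ) ^ (0.09 : ℝ)) ∧
  (∀ u ∈ D, 2 ≤ (G.neighborFinset u ∩ V1).card) ∧
  (∀ u ∈ D, ∀ v ∈ D, ∀ q : G.Walk u v, q.IsPath → 0 < q.length →
    2 * Real.log n / (3 * Real.log (Real.log n)) < (q.length : ℝ)) ∧
  (∀ u ∈ D, ∀ q : G.Walk u u, q.IsCycle →
    2 * Real.log n / (3 * Real.log (Real.log n)) < (q.length : ℝ)) ∧
  IsExpander (G.induce (V1 : Set (Fin n))) (β * V1.card) (fBeta β V1.card)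

section Aux
noncomputable def Kn (n : ℕ) : Finset (Sym2 (Fin n)) := (⊤ : SimpleGraph (Fin n)).edgeFinset

lemma Kn_card (n : ℕ) : (Kn n).card = n.choose 2 := by
  rw [Kn, SimpleGraph.card_edgeFinset_top_eq_card_choose_two, Fintype.card_fin]

lemma sum_graphs_eq (n : ℕ) (f : Finset (Sym2 (Fin n)) → ℝ) :
    ∑ G : SimpleGraph (Fin n), f G.edgeFinset = ∑ t ∈ (Kn n).powerset, f t := by
  refine Finset.sum_nbij' (fun G => G.edgeFinset) (fun t => fromEdgeSet ↑t) ?_ ?_ ?_ ?_ ?_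
  · intro G _
    exact Finset.mem_powerset.2 (SimpleGraph.edgeFinset_mono le_top)
  · intro t _; exact Finset.mem_univ _
  · intro G _
    rw [SimpleGraph.coe_edgeFinset, SimpleGraph.fromEdgeSet_edgeSet]
  · intro t ht
    have hsub : ∀ e ∈ t, ¬ e.IsDiag := by
      intro e he
      have : e ∈ Kn n := Finset.mem_powerset.1 ht he
      exact SimpleGraph.not_isDiag_of_mem_edgeSet ⊤ (SimpleGraph.mem_edgeFinset.1 this)
    have : (fromEdgeSet (↑t : Set (Sym2 (Fin n)))).edgeSet = ↑t := by
      rw [SimpleGraph.edgeSet_fromEdgeSet]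
      ext e
      simp only [Set.mem_diff, Finset.mem_coe, Set.mem_setOf_eq]
      exact ⟨fun h => h.1, fun h => ⟨h, hsub e h⟩⟩
    simp [SimpleGraph.edgeFinset, this]
  · intro G _; rfl

lemma sum_powerset_weight {ι : Type*} [DecidableEq ι] (M : Finset ι) (a b : ℝ) :
    ∑ t ∈ M.powerset, a ^ t.card * b ^ (M.card - t.card) = (a + b) ^ M.card := by
  rw [← Finset.prod_const]
  rw [Finset.prod_add]
  refine Finset.sum_congr rfl fun t ht => ?_
  rw [Finset.prod_const, Finset.prod_const, Finset.card_sdiff_of_subset (Finset.mem_powerset.1 ht)]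

lemma gnpWeight_sum (n : ℕ) (p : ℝ) : ∑ G : SimpleGraph (Fin n), gnpWeight n p G = 1 := by
  have h := sum_graphs_eq n (fun t => p ^ t.card * (1 - p) ^ (n.choose 2 - t.card))
  simp only [gnpWeight]
  rw [h, ← Kn_card n, sum_powerset_weight, add_sub_cancel, one_pow]

lemma gnpWeight_nonneg {n : ℕ} {p : ℝ} (hp0 : 0 ≤ p) (hp1 : p ≤ 1) (G : SimpleGraph (Fin n)) :
    0 ≤ gnpWeight n p G := by
  have : (0:ℝ) ≤ 1 - p := by linarith
  exact mul_nonneg (pow_nonneg hp0 _) (pow_nonneg this _)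

lemma gnpProb_nonneg {n : ℕ} {p : ℝ} (hp0 : 0 ≤ p) (hp1 : p ≤ 1)
    (A : SimpleGraph (Fin n) → Prop) : 0 ≤ gnpProb n p A := by
  refine Finset.sum_nonneg fun G _ => ?_
  split
  · exact gnpWeight_nonneg hp0 hp1 G
  · exact le_rfl

lemma gnpProb_mono {n : ℕ} {p : ℝ} (hp0 : 0 ≤ p) (hp1 : p ≤ 1)
    {A B : SimpleGraph (Fin n) → Prop} (h : ∀ G, A G → B G) :
    gnpProb n p A ≤ gnpProb n p B := by
  refine Finset.sum_le_sum fun G _ => ?_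
  by_cases hA : A G
  · rw [if_pos hA, if_pos (h G hA)]
  · rw [if_neg hA]
    split
    · exact gnpWeight_nonneg hp0 hp1 G
    · exact le_rfl

lemma gnpProb_compl (n : ℕ) (p : ℝ) (A : SimpleGraph (Fin n) → Prop) :
    gnpProb n p A = 1 - gnpProb n p (fun G => ¬ A G) := by
  have : gnpProb n p A + gnpProb n p (fun G => ¬ A G) = 1 := by
    rw [gnpProb, gnpProb, ← Finset.sum_add_distrib, ← gnpWeight_sum n p]
    refine Finset.sum_congr rfl fun G _ => ?_
    by_cases hA : A G <;> simp [hA]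
  linarith

lemma gnpProb_union_bound {n : ℕ} {p : ℝ} (hp0 : 0 ≤ p) (hp1 : p ≤ 1)
    {ι : Type*} (s : Finset ι) (B : ι → SimpleGraph (Fin n) → Prop) :
    gnpProb n p (fun G => ∃ i ∈ s, B i G) ≤ ∑ i ∈ s, gnpProb n p (B i) := by
  rw [gnpProb]
  simp only [gnpProb]
  rw [Finset.sum_comm]
  refine Finset.sum_le_sum fun G _ => ?_
  by_cases h : ∃ i ∈ s, B i G
  · obtain ⟨i, hi, hBi⟩ := h
    rw [if_pos ⟨i, hi, hBi⟩]
    calc gnpWeight n p G = (if B i G then gnpWeight n p G else 0) := by rw [if_pos hBi]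
      _ ≤ ∑ j ∈ s, (if B j G then gnpWeight n p G else 0) := by
          refine Finset.single_le_sum (f := fun j => if B j G then gnpWeight n p G else 0) (fun j _ => ?_) hi
          split
          · exact gnpWeight_nonneg hp0 hp1 G
          · exact le_rfl
  · rw [if_neg h]
    refine Finset.sum_nonneg fun j _ => ?_
    split
    · exact gnpWeight_nonneg hp0 hp1 G
    · exact le_rfl

lemma gnpProb_subset_edges {n : ℕ} {p : ℝ} (hp0 : 0 ≤ p)
    {S : Finset (Sym2 (Fin n))} (hS : S ⊆ Kn n) :
    gnpProb n p (fun G => S ⊆ G.edgeFinset) = p ^ S.card := by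
  rw [gnpProb]
  have h := sum_graphs_eq n (fun t => if S ⊆ t then p ^ t.card * (1-p) ^ (n.choose 2 - t.card) else 0)
  simp only [gnpWeight]
  refine Eq.trans ((Finset.sum_congr rfl fun G _ => by
    by_cases hS' : S ⊆ G.edgeFinset <;> simp [hS']).trans h) ?_
  -- reindex t ⊆ Kn with S ⊆ t  by  t = S ∪ t', t' ⊆ Kn \ S
  rw [Finset.sum_ite, Finset.sum_const, smul_zero, add_zero]
  have hbij : ∑ t ∈ (Kn n).powerset.filter (fun t => S ⊆ t),
      p ^ t.card * (1-p) ^ (n.choose 2 - t.card)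
      = ∑ t' ∈ ((Kn n) \ S).powerset, p ^ (S.card + t'.card) * (1-p) ^ (((Kn n) \ S).card - t'.card) := by
    refine Finset.sum_nbij' (fun t => t \ S) (fun t' => S ∪ t') ?_ ?_ ?_ ?_ ?_
    · intro t ht
      simp only [Finset.mem_filter, Finset.mem_powerset] at ht
      exact Finset.mem_powerset.2 (Finset.sdiff_subset_sdiff ht.1 (Finset.Subset.refl _))
    · intro t' ht'
      simp only [Finset.mem_powerset] at ht'
      refine Finset.mem_filter.2 ⟨Finset.mem_powerset.2 ?_, Finset.subset_union_left⟩
      exact Finset.union_subset hS (ht'.trans Finset.sdiff_subset)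
    · intro t ht
      simp only [Finset.mem_filter, Finset.mem_powerset] at ht
      show S ∪ t \ S = t
      exact (Finset.union_sdiff_of_subset ht.2)
    · intro t' ht'
      simp only [Finset.mem_powerset] at ht'
      show (S ∪ t') \ S = t'
      rw [Finset.union_sdiff_cancel_left]
      exact Finset.disjoint_left.2 fun x hx hx' => (Finset.mem_sdiff.1 (ht' hx')).2 hx
    · intro t ht
      simp only [Finset.mem_filter, Finset.mem_powerset] at ht
      have h3 : S.card ≤ t.card := Finset.card_le_card ht.2
      have h2 : t.card ≤ (Kn n).card := Finset.card_le_card ht.1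
      have e1 : (t \ S).card = t.card - S.card := Finset.card_sdiff_of_subset ht.2
      have e2 : ((Kn n) \ S).card = (Kn n).card - S.card := Finset.card_sdiff_of_subset hS
      have e3 : S.card + (t \ S).card = t.card := by omega
      have e4 : ((Kn n) \ S).card - (t \ S).card = n.choose 2 - t.card := by
        have := Kn_card n; omega
      show p ^ t.card * (1-p) ^ (n.choose 2 - t.card)
          = p ^ (S.card + (t \ S).card) * (1-p) ^ (((Kn n) \ S).card - (t \ S).card)
      rw [e3, e4]
  rw [hbij]
  have : ∀ t' ∈ ((Kn n) \ S).powerset, p ^ (S.card + t'.card) * (1-p) ^ (((Kn n) \ S).card - t'.card)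
      = p ^ S.card * (p ^ t'.card * (1-p) ^ (((Kn n) \ S).card - t'.card)) := by
    intro t' _; rw [pow_add, mul_assoc]
  rw [Finset.sum_congr rfl this, ← Finset.mul_sum, sum_powerset_weight, add_sub_cancel, one_pow,
    mul_one]

noncomputable def pairsIn (n : ℕ) (U : Finset (Fin n)) : Finset (Sym2 (Fin n)) :=
  (Kn n).filter (fun e => ∀ v ∈ e, v ∈ U)

lemma pairsIn_card_le (n : ℕ) (U : Finset (Fin n)) : (pairsIn n U).card ≤ U.card ^ 2 := by
  have hsub : pairsIn n U ⊆ (U ×ˢ U).image (fun q => s(q.1, q.2)) := by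
    intro e he
    induction e with
    | _ a b =>
      simp only [pairsIn, Finset.filter_congr_decidable, Finset.mem_filter] at he
      have ha : a ∈ U := he.2 a (Sym2.mem_mk_left a b)
      have hb : b ∈ U := he.2 b (Sym2.mem_mk_right a b)
      exact Finset.mem_image.2 ⟨(a, b), Finset.mem_product.2 ⟨ha, hb⟩, rfl⟩
  calc (pairsIn n U).card ≤ ((U ×ˢ U).image (fun q => s(q.1, q.2))).card := Finset.card_le_card hsub
    _ ≤ (U ×ˢ U).card := Finset.card_image_le
    _ = U.card ^ 2 := by rw [Finset.card_product, sq]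

lemma eIn_witness {n : ℕ} {G : SimpleGraph (Fin n)} {U : Finset (Fin n)} {m : ℕ}
    (h : m ≤ eIn G U) :
    ∃ S ∈ (pairsIn n U).powersetCard m, S ⊆ G.edgeFinset := by
  obtain ⟨S, hS1, hS2⟩ := Finset.exists_subset_card_eq h
  refine ⟨S, Finset.mem_powersetCard.2 ⟨?_, hS2⟩, ?_⟩
  · intro e he
    have h2 := hS1 he
    simp only [Finset.filter_congr_decidable, Finset.mem_filter] at h2
    simp only [pairsIn, Finset.filter_congr_decidable, Finset.mem_filter]
    exact ⟨SimpleGraph.edgeFinset_mono le_top h2.1, h2.2⟩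
  · intro x hx
    have h2 := hS1 hx
    simp only [Finset.mem_filter] at h2
    exact h2.1

lemma prob_eIn_ge {n : ℕ} {p : ℝ} (hp0 : 0 ≤ p) (hp1 : p ≤ 1) (U : Finset (Fin n)) (m : ℕ) :
    gnpProb n p (fun G => m ≤ eIn G U) ≤ ((U.card ^ 2).choose m : ℝ) * p ^ m := by
  calc gnpProb n p (fun G => m ≤ eIn G U)
      ≤ gnpProb n p (fun G => ∃ S ∈ (pairsIn n U).powersetCard m, S ⊆ G.edgeFinset) :=
        gnpProb_mono hp0 hp1 (fun G h => eIn_witness h)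
    _ ≤ ∑ S ∈ (pairsIn n U).powersetCard m, gnpProb n p (fun G => S ⊆ G.edgeFinset) :=
        gnpProb_union_bound hp0 hp1 _ _
    _ = ∑ S ∈ (pairsIn n U).powersetCard m, p ^ m := by
        refine Finset.sum_congr rfl fun S hS => ?_
        have hm := Finset.mem_powersetCard.1 hS
        rw [gnpProb_subset_edges hp0 (hm.1.trans (Finset.filter_subset _ _)), hm.2]
    _ = ((pairsIn n U).card.choose m : ℝ) * p ^ m := by
        rw [Finset.sum_const, Finset.card_powersetCard, nsmul_eq_mul]
    _ ≤ ((U.card ^ 2).choose m : ℝ) * p ^ m := by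
        have := Nat.choose_le_choose m (pairsIn_card_le n U)
        exact mul_le_mul_of_nonneg_right (Nat.cast_le.2 this) (pow_nonneg hp0 m)

lemma pow_le_fact_exp (u : ℕ) : (u:ℝ)^u ≤ (u.factorial : ℝ) * Real.exp u := by
  have h := Real.sum_le_exp_of_nonneg (x := (u:ℝ)) (by positivity) (u+1)
  have hterm : (u:ℝ)^u / u.factorial ≤ ∑ i ∈ range (u+1), (u:ℝ)^i / i.factorial := by
    refine Finset.single_le_sum (f := fun i => (u:ℝ)^i / i.factorial) (fun i _ => by positivity) ?_
    exact Finset.self_mem_range_succ u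
  have hfac : (0:ℝ) < u.factorial := by positivity
  have := hterm.trans h
  rw [div_le_iff₀ hfac] at this
  linarith [this]

lemma choose_le_exp {N u : ℕ} (hu : 1 ≤ u) (hN : 1 ≤ N) :
    (N.choose u : ℝ) ≤ Real.exp (u * (1 + Real.log N - Real.log u)) := by
  have hNpos : (0:ℝ) < N := by exact_mod_cast hN
  have hupos : (0:ℝ) < u := by exact_mod_cast hu
  have h1 : (N.choose u : ℝ) ≤ (N:ℝ)^u / u.factorial := by
    have := Nat.choose_le_pow_div (α := ℝ) u N
    push_cast at this ⊢
    exact this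
  have h2 := pow_le_fact_exp u
  have hfac : (0:ℝ) < u.factorial := by positivity
  have huu : (0:ℝ) < (u:ℝ)^u := by positivity
  have hexp : (0:ℝ) < Real.exp u := Real.exp_pos _
  have h3 : (N:ℝ)^u / u.factorial ≤ (N:ℝ)^u * Real.exp u / (u:ℝ)^u := by
    rw [div_le_div_iff₀ hfac huu]
    have hNu : (0:ℝ) ≤ (N:ℝ)^u := le_of_lt (by positivity)
    calc (N:ℝ)^u * (u:ℝ)^u ≤ (N:ℝ)^u * ((u.factorial : ℝ) * Real.exp u) :=
          mul_le_mul_of_nonneg_left h2 hNu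
      _ = (N:ℝ)^u * Real.exp u * u.factorial := by ring
  have h4 : (N:ℝ)^u * Real.exp u / (u:ℝ)^u = Real.exp (u * (1 + Real.log N - Real.log u)) := by
    have eN : Real.exp ((u:ℝ) * Real.log N) = (N:ℝ)^u := by
      rw [Real.exp_nat_mul, Real.exp_log hNpos]
    have eu : Real.exp ((u:ℝ) * Real.log u) = (u:ℝ)^u := by
      rw [Real.exp_nat_mul, Real.exp_log hupos]
    have ee : Real.exp ((u:ℝ) * 1) = Real.exp u := by norm_num
    rw [show (u:ℝ) * (1 + Real.log N - Real.log u)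
        = (u:ℝ) * Real.log N + (u:ℝ) * 1 - (u:ℝ) * Real.log u by ring,
      Real.exp_sub, Real.exp_add, eN, eu, ee]
  linarith [h1.trans h3, h4.le]

lemma core {β p : ℝ} {n u m : ℕ} (hβ : 0 < β) (hn3 : 3 ≤ n)
    (hA : 1 ≤ 50*β*Real.log n) (hplb : Real.log n / n ≤ p) (hp1 : p ≤ 1)
    (hu1 : 1 ≤ u) (hu2 : (u:ℝ) ≤ 12*β*n) (hm : 50*β*((n:ℝ)*p)*u ≤ m) (hm1 : 1 ≤ m) :
    (n.choose u : ℝ) * ((u^2).choose m : ℝ) * p^m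
      ≤ Real.exp (1 - Real.log (12*β)
          - 50*β*Real.log n * (Real.log 50 - Real.log 12 - 1)) ^ u := by
  have hnpos : (0:ℝ) < n := by positivity
  have hn1 : (1:ℝ) < n := by exact_mod_cast (by omega : 1 < n)
  have hln : 1 < Real.log n := by
    rw [Real.lt_log_iff_exp_lt hnpos]
    calc Real.exp 1 < 2.7182818286 := Real.exp_one_lt_d9
      _ ≤ 3 := by norm_num
      _ ≤ (n:ℝ) := by exact_mod_cast hn3
  have hlnpos : 0 < Real.log n := by linarith
  have hp0 : 0 < p := lt_of_lt_of_le (div_pos hlnpos hnpos) hplb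
  have hupos : (0:ℝ) < u := by exact_mod_cast hu1
  have hmpos : (0:ℝ) < m := by exact_mod_cast hm1
  have hnp : Real.log n ≤ (n:ℝ) * p := by
    rw [div_le_iff₀ hnpos] at hplb; linarith
  -- log abbreviations
  set ln := Real.log n with hlndef
  set lu := Real.log u with hludef
  set lp := Real.log p with hlpdef
  set lm := Real.log m with hlmdef
  set lb := Real.log β with hlbdef
  -- bound pieces
  have hb1 : (n.choose u : ℝ) ≤ Real.exp (u * (1 + ln - lu)) := choose_le_exp hu1 (by omega)
  have hb2 : ((u^2).choose m : ℝ) ≤ Real.exp (m * (1 + 2*lu - lm)) := by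
    have h := choose_le_exp (N := u^2) hm1 (Nat.one_le_iff_ne_zero.2 (pow_ne_zero 2 (by omega)))
    have : Real.log ((u^2 : ℕ) : ℝ) = 2 * lu := by
      push_cast
      rw [Real.log_pow]; push_cast; ring
    rw [this] at h
    exact h
  have hb3 : p^m = Real.exp (m * lp) := by
    rw [hlpdef, ← Real.log_pow, Real.exp_log (pow_pos hp0 m)]
  -- log facts
  have hlog50β : Real.log (50*β) = Real.log 50 + lb := Real.log_mul (by norm_num) (ne_of_gt hβ)
  have hlog12β : Real.log (12*β) = Real.log 12 + lb := Real.log_mul (by norm_num) (ne_of_gt hβ)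
  have hlm_ge : Real.log 50 + lb + ln + lp + lu ≤ lm := by
    have hM : (0:ℝ) < 50*β*((n:ℝ)*p)*u := by positivity
    have h := (Real.log_le_log_iff hM hmpos).2 hm
    have : Real.log (50*β*((n:ℝ)*p)*u)
        = Real.log 50 + lb + ln + lp + lu := by
      rw [Real.log_mul (ne_of_gt (by positivity)) (ne_of_gt hupos),
        Real.log_mul (ne_of_gt (by positivity)) (ne_of_gt (by positivity)),
        Real.log_mul (ne_of_gt hnpos) (ne_of_gt hp0), hlog50β]
      ring
    linarith [this ▸ h]
  have hlu_le : lu ≤ Real.log 12 + lb + ln := by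
    have h := (Real.log_le_log_iff hupos (by positivity : (0:ℝ) < 12*β*n)).2 hu2
    have : Real.log (12*β*n) = Real.log 12 + lb + ln := by
      rw [Real.log_mul (ne_of_gt (by positivity)) (ne_of_gt hnpos), hlog12β]
    linarith [this ▸ h]
  have hc0 : (1:ℝ) < Real.log 50 - Real.log 12 := by
    have h1 : Real.log 50 - Real.log 12 = Real.log (50/12) := by
      rw [Real.log_div (by norm_num) (by norm_num)]
    rw [h1, Real.lt_log_iff_exp_lt (by norm_num)]
    calc Real.exp 1 < 2.7182818286 := Real.exp_one_lt_d9
      _ < 50/12 := by norm_num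
  -- main exponent inequality
  have hc : Real.log 50 - Real.log 12 - 1 ≤ ln - lu + (Real.log 50 + lb) - 1 := by
    linarith
  have hcpos : 0 < ln - lu + (Real.log 50 + lb) - 1 := by linarith
  have hmL : (m:ℝ) * (1 + 2*lu + lp - lm) ≤ -(50*β*ln*u) * (ln - lu + (Real.log 50 + lb) - 1) := by
    have step1 : 1 + 2*lu + lp - lm ≤ -(ln - lu + (Real.log 50 + lb) - 1) := by linarith
    have step2 : (m:ℝ) * (1 + 2*lu + lp - lm)
        ≤ (m:ℝ) * (-(ln - lu + (Real.log 50 + lb) - 1)) :=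
      mul_le_mul_of_nonneg_left step1 (le_of_lt hmpos)
    have step3 : 50*β*((n:ℝ)*p)*u * (ln - lu + (Real.log 50 + lb) - 1)
        ≤ (m:ℝ) * (ln - lu + (Real.log 50 + lb) - 1) :=
      mul_le_mul_of_nonneg_right hm (le_of_lt hcpos)
    have step4 : 50*β*ln*u * (ln - lu + (Real.log 50 + lb) - 1)
        ≤ 50*β*((n:ℝ)*p)*u * (ln - lu + (Real.log 50 + lb) - 1) := by
      have h' := mul_le_mul_of_nonneg_right hnp (le_of_lt hupos)
      have h'' := mul_le_mul_of_nonneg_left h' (by positivity : (0:ℝ) ≤ 50*β)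
      have h3 : 50*β*ln*u ≤ 50*β*((n:ℝ)*p)*u := by nlinarith [h'']
      exact mul_le_mul_of_nonneg_right h3 (le_of_lt hcpos)
    linarith [step2, step3, step4]
  have hfinal : (u:ℝ) * (1 + ln - lu) + ((m:ℝ) * (1 + 2*lu - lm) + (m:ℝ)*lp)
      ≤ (u:ℝ) * (1 - (Real.log 12 + lb)
          - 50*β*ln * (Real.log 50 - Real.log 12 - 1)) := by
    have key : (u:ℝ) * (1 + ln - lu) - 50*β*ln*u * (ln - lu + (Real.log 50 + lb) - 1)
        ≤ (u:ℝ) * (1 - (Real.log 12 + lb) - 50*β*ln * (Real.log 50 - Real.log 12 - 1)) := by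
      have hy : -(Real.log 12 + lb) ≤ ln - lu := by linarith
      have hA1 : 1 ≤ 50*β*ln := hA
      have hP : (0:ℝ) ≤ (50*β*ln - 1) * ((ln - lu) + (Real.log 12 + lb)) :=
        mul_nonneg (by linarith) (by linarith)
      have expand : (u:ℝ) * (1 - (Real.log 12 + lb) - 50*β*ln * (Real.log 50 - Real.log 12 - 1))
          - ((u:ℝ) * (1 + ln - lu) - 50*β*ln*u * (ln - lu + (Real.log 50 + lb) - 1))
          = (u:ℝ) * ((50*β*ln - 1) * ((ln - lu) + (Real.log 12 + lb))) := by ring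
      linarith [mul_nonneg (le_of_lt hupos) hP, expand]
    linarith [hmL, key]
  -- assemble
  calc (n.choose u : ℝ) * ((u^2).choose m : ℝ) * p^m
      ≤ Real.exp ((u:ℝ) * (1 + ln - lu)) * Real.exp ((m:ℝ) * (1 + 2*lu - lm))
          * Real.exp ((m:ℝ) * lp) := by
        rw [hb3]
        have h1 : (0:ℝ) ≤ (n.choose u : ℝ) := by positivity
        have h2 : (0:ℝ) ≤ ((u^2).choose m : ℝ) := by positivity
        have h3 : (0:ℝ) ≤ Real.exp ((m:ℝ) * lp) := (Real.exp_pos _).le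
        exact mul_le_mul (mul_le_mul hb1 hb2 h2 (Real.exp_pos _).le) le_rfl h3
          (by positivity)
    _ = Real.exp ((u:ℝ) * (1 + ln - lu) + ((m:ℝ) * (1 + 2*lu - lm) + (m:ℝ)*lp)) := by
        rw [Real.exp_add, Real.exp_add]; ring
    _ ≤ Real.exp ((u:ℝ) * (1 - (Real.log 12 + lb)
          - 50*β*ln * (Real.log 50 - Real.log 12 - 1))) := Real.exp_le_exp.2 hfinal
    _ = Real.exp (1 - Real.log (12*β) - 50*β*ln * (Real.log 50 - Real.log 12 - 1)) ^ u := by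
        rw [← Real.exp_nat_mul, hlog12β]

lemma fail_bound {β : ℝ} (hβ : 0 < β) {n : ℕ} {p : ℝ} (hp0 : 0 ≤ p) (hp1 : p ≤ 1)
    (hplb : Real.log n / n ≤ p) (hn3 : 3 ≤ n) (hA : 1 ≤ 50*β*Real.log n)
    (hhalf : Real.exp (1 - Real.log (12*β)
        - 50*β*Real.log n * (Real.log 50 - Real.log 12 - 1)) ≤ 1/2) :
    gnpProb n p (fun G => ¬ (∀ U : Finset (Fin n), (U.card:ℝ) ≤ 12*β*(n:ℝ) →
        (eIn G U : ℝ) ≤ 50*β*((n:ℝ)*p)*U.card))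
      ≤ 2 * Real.exp (1 - Real.log (12*β)
          - 50*β*Real.log n * (Real.log 50 - Real.log 12 - 1)) := by
  set s0 := Real.exp (1 - Real.log (12*β)
      - 50*β*Real.log n * (Real.log 50 - Real.log 12 - 1)) with hs0def
  have hs0pos : 0 < s0 := Real.exp_pos _
  set mf : ℕ → ℕ := fun u => ⌊50*β*((n:ℝ)*p)*u⌋₊ + 1 with hmf
  set 𝒰 : Finset (Finset (Fin n)) :=
    Finset.univ.filter (fun U : Finset (Fin n) => (U.card:ℝ) ≤ 12*β*(n:ℝ)) with hUdef
  set t : ℕ → ℝ := fun u =>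
    if (u:ℝ) ≤ 12*β*(n:ℝ) then ((u^2).choose (mf u) : ℝ) * p ^ (mf u) else 0 with ht
  have htnonneg : ∀ u, 0 ≤ t u := by
    intro u
    rw [ht]
    simp only []
    split
    · positivity
    · exact le_rfl
  -- step 1 : union bound
  have step1 : gnpProb n p (fun G => ¬ (∀ U : Finset (Fin n), (U.card:ℝ) ≤ 12*β*(n:ℝ) →
      (eIn G U : ℝ) ≤ 50*β*((n:ℝ)*p)*U.card)) ≤ ∑ U ∈ 𝒰, t U.card := by
    calc gnpProb n p (fun G => ¬ (∀ U : Finset (Fin n), (U.card:ℝ) ≤ 12*β*(n:ℝ) →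
          (eIn G U : ℝ) ≤ 50*β*((n:ℝ)*p)*U.card))
        ≤ gnpProb n p (fun G => ∃ U ∈ 𝒰, mf U.card ≤ eIn G U) := by
          refine gnpProb_mono hp0 hp1 fun G hG => ?_
          push_neg at hG
          obtain ⟨U, hU1, hU2⟩ := hG
          refine ⟨U, by simp [hUdef, hU1], ?_⟩
          simp only [hmf]
          have hnonneg : 0 ≤ 50*β*((n:ℝ)*p)*U.card := by positivity
          have := (Nat.floor_lt hnonneg).2 hU2
          omega
      _ ≤ ∑ U ∈ 𝒰, gnpProb n p (fun G => mf U.card ≤ eIn G U) :=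
          gnpProb_union_bound hp0 hp1 _ _
      _ ≤ ∑ U ∈ 𝒰, t U.card := by
          refine Finset.sum_le_sum fun U hU => ?_
          have hUcard : (U.card:ℝ) ≤ 12*β*(n:ℝ) := by
            simp only [hUdef, Finset.mem_filter] at hU
            exact hU.2
          rw [ht]
          simp only [if_pos hUcard]
          exact prob_eIn_ge hp0 hp1 U (mf U.card)
  -- step 2 : group by cardinality
  have step2 : ∑ U ∈ 𝒰, t U.card ≤ ∑ j ∈ range (n+1), (n.choose j) • t j := by
    calc ∑ U ∈ 𝒰, t U.card ≤ ∑ U : Finset (Fin n), t U.card :=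
          Finset.sum_le_sum_of_subset_of_nonneg (Finset.filter_subset _ _)
            (fun U _ _ => htnonneg U.card)
      _ = ∑ U ∈ (Finset.univ : Finset (Fin n)).powerset, t U.card := by
          rw [Finset.powerset_univ]
      _ = ∑ j ∈ range ((Finset.univ : Finset (Fin n)).card + 1),
            ∑ U ∈ Finset.powersetCard j (Finset.univ : Finset (Fin n)), t U.card := by
          rw [Finset.powerset_card_disjiUnion]; exact Finset.sum_disjiUnion _ _ _
      _ = ∑ j ∈ range (n+1), (n.choose j) • t j := by
          rw [show (Finset.univ : Finset (Fin n)).card = n by simp]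
          refine Finset.sum_congr rfl fun j _ => ?_
          rw [Finset.sum_powersetCard]
          simp
  -- step 3 : per-cardinality bound
  have step3 : ∀ j ∈ range n, (n.choose (j+1)) • t (j+1) ≤ s0 ^ (j+1) := by
    intro j _
    rw [ht]
    simp only []
    split
    · rename_i hle
      rw [nsmul_eq_mul, ← mul_assoc]
      refine core hβ hn3 hA hplb hp1 (by omega) hle ?_ (by simp [hmf])
      have h5 := Nat.lt_floor_add_one (50*β*((n:ℝ)*p)*((j:ℝ)+1))
      simp only [hmf]
      push_cast
      linarith
    · simp only [smul_zero]
      positivity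
  have hzero : (n.choose 0) • t 0 = 0 := by
    rw [ht]
    simp only []
    split
    · rename_i h
      simp only [hmf]
      norm_num
    · simp
  have step4 : ∑ j ∈ range (n+1), (n.choose j) • t j ≤ 2 * s0 := by
    rw [Finset.sum_range_succ']
    have h1 : ∑ j ∈ range n, (n.choose (j+1)) • t (j+1) ≤ ∑ j ∈ range n, s0 ^ (j+1) :=
      Finset.sum_le_sum step3
    have hgeom : ∑ j ∈ range n, s0 ^ j ≤ 2 := by
      have hmul := geom_sum_mul s0 n
      have hs0n : (0:ℝ) ≤ s0 ^ n := by positivity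
      have hsum0 : (0:ℝ) ≤ ∑ j ∈ range n, s0 ^ j := by positivity
      nlinarith [hmul, hs0n, hsum0, hhalf]
    have h2 : ∑ j ∈ range n, s0 ^ (j+1) = s0 * ∑ j ∈ range n, s0 ^ j := by
      rw [Finset.mul_sum]
      refine Finset.sum_congr rfl fun j _ => ?_
      ring
    have h3 : s0 * ∑ j ∈ range n, s0 ^ j ≤ s0 * 2 :=
      mul_le_mul_of_nonneg_left hgeom hs0pos.le
    rw [hzero]
    linarith
  linarith [step1, step2, step4]

end Aux
/-- Claim 4.7: for fixed `β > 0` and `p ≥ ln n / n`, w.h.p. every vertex set `U` with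
`|U| ≤ 12βn` spans at most `50 β n p |U|` edges. -/
theorem stmt13 (β : ℝ) (hβ : 0 < β) (p : ℕ → ℝ) (hp0 : ∀ n, 0 ≤ p n) (hp1 : ∀ n, p n ≤ 1)
    (hp : ∀ n : ℕ, Real.log n / n ≤ p n) :
    WHP p (fun n G => ∀ U : Finset (Fin n),
      (U.card : ℝ) ≤ 12 * β * n →
      (eIn G U : ℝ) ≤ 50 * β * ((n : ℝ) * p n) * U.card) := by
  set s0 : ℕ → ℝ := fun n => Real.exp (1 - Real.log (12*β)
      - 50*β*Real.log n * (Real.log 50 - Real.log 12 - 1)) with hs0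
  set q : ℕ → ℝ := fun n => gnpProb n (p n)
      (fun G => ¬ (∀ U : Finset (Fin n), (U.card:ℝ) ≤ 12*β*(n:ℝ) →
        (eIn G U : ℝ) ≤ 50*β*((n:ℝ)*(p n))*U.card)) with hq
  have hc0 : (0:ℝ) < Real.log 50 - Real.log 12 - 1 := by
    have h1 : Real.log 50 - Real.log 12 = Real.log (50/12) := by
      rw [Real.log_div (by norm_num) (by norm_num)]
    have : (1:ℝ) < Real.log (50/12) := by
      rw [Real.lt_log_iff_exp_lt (by norm_num)]
      calc Real.exp 1 < 2.7182818286 := Real.exp_one_lt_d9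
        _ < 50/12 := by norm_num
    linarith [h1 ▸ this]
  have hlogtop : Tendsto (fun n : ℕ => Real.log n) atTop atTop :=
    Real.tendsto_log_atTop.comp tendsto_natCast_atTop_atTop
  have hs0tend : Tendsto s0 atTop (nhds 0) := by
    rw [hs0]
    refine Real.tendsto_exp_atBot.comp ?_
    have h1 : Tendsto (fun n : ℕ => 50*β*Real.log n * (Real.log 50 - Real.log 12 - 1))
        atTop atTop := by
      have := hlogtop.const_mul_atTop (show (0:ℝ) < 50*β by positivity)
      have h2 := this.atTop_mul_const hc0
      exact h2
    have h3 := tendsto_neg_atTop_atBot.comp h1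
    have h4 := tendsto_atBot_add_const_left atTop (1 - Real.log (12*β)) h3
    refine h4.congr fun n => ?_
    simp [sub_eq_add_neg, Function.comp]
  have hev : ∀ᶠ n : ℕ in atTop, q n ≤ 2 * s0 n := by
    have e1 : ∀ᶠ n : ℕ in atTop, 3 ≤ n := eventually_ge_atTop 3
    have e2 : ∀ᶠ n : ℕ in atTop, 1 ≤ 50*β*Real.log n := by
      have := (hlogtop.const_mul_atTop (show (0:ℝ) < 50*β by positivity)).eventually_ge_atTop 1
      exact this
    have e3 : ∀ᶠ n : ℕ in atTop, s0 n ≤ 1/2 := by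
      have := hs0tend.eventually (eventually_le_nhds (show (0:ℝ) < 1/2 by norm_num))
      exact this
    filter_upwards [e1, e2, e3] with n h1 h2 h3
    exact fail_bound hβ (hp0 n) (hp1 n) (hp n) h1 h2 h3
  have hq0 : ∀ n, 0 ≤ q n := fun n => gnpProb_nonneg (hp0 n) (hp1 n) _
  have hqtend : Tendsto q atTop (nhds 0) :=
    squeeze_zero' (Eventually.of_forall hq0) hev (by simpa using hs0tend.const_mul 2)
  have hfin : Tendsto (fun n => 1 - q n) atTop (nhds 1) := by
    have := hqtend.const_sub 1
    simpa using this
  rw [WHP]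
  refine hfin.congr fun n => ?_
  rw [hq]
  exact (gnpProb_compl n (p n) _).symm
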